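/- Let X be a finite set and let the label space be {-1, +1} with the 0-1 loss. For every deterministic learning rule A mapping samples of size m from X × {-1,+1} to predictors h : X → {-1,+1}, there exists a labeling function f : X → {-1,+1} such that, with D the distribution on X × {-1,+1} given by drawing x uniformly from X and outputting (x, f(x)), the predictor f has zero population error L_D(f) = 0, yet the expected population error of the learned predictor satisfies E_{S ~ D^m}[ L_D(A(S)) ] ≥ 1/2 − m / (2 |X|). -/

import Mathlib

open Finset

private lemma flip_sum {X : Type*} [Fintype X] [DecidableEq X] {m : ℕ}
    (A : (Fin m → X × Bool) → (X → Bool)) (xs : Fin m → X) (x : X)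
    (hx : ∀ i, xs i ≠ x) :
    (Fintype.card (X → Bool) : ℝ) =
      2 * ∑ f : X → Bool,
        (if A (fun i => (xs i, f (xs i))) x ≠ f x then (1:ℝ) else 0) := by
  classical
  set g : (X → Bool) → ℝ := fun f =>
    if A (fun i => (xs i, f (xs i))) x ≠ f x then (1:ℝ) else 0 with hg
  set σ : (X → Bool) → (X → Bool) := fun f => Function.update f x (!(f x)) with hσ
  have hinv : Function.Involutive σ := by
    intro f
    funext y
    by_cases hy : y = x
    · subst hy; simp [hσ]
    · simp [hσ, Function.update_of_ne hy]
  have hsum : ∑ f : X → Bool, g f = ∑ f : X → Bool, g (σ f) :=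
    (Equiv.sum_comp (Function.Involutive.toPerm σ hinv) g).symm
  have hpair : ∀ f : X → Bool, g f + g (σ f) = 1 := by
    intro f
    have hA : (fun i => (xs i, (σ f) (xs i))) = fun i => (xs i, f (xs i)) := by
      funext i
      simp [hσ, Function.update_of_ne (hx i)]
    have hx' : (σ f) x = !(f x) := by simp [hσ]
    simp only [hg, hA, hx']
    cases h1 : A (fun i => (xs i, f (xs i))) x <;> cases h2 : f x <;> simp
  have : 2 * ∑ f : X → Bool, g f = ∑ f : X → Bool, (g f + g (σ f)) := by
    rw [Finset.sum_add_distrib, ← hsum]; ring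
  rw [this]
  simp [hpair]

private lemma sample_bound {X : Type*} [Fintype X] [DecidableEq X] {m : ℕ}
    (A : (Fin m → X × Bool) → (X → Bool)) (xs : Fin m → X) :
    ((Fintype.card X : ℝ) - m) * (Fintype.card (X → Bool) : ℝ) / 2 ≤
      ∑ f : X → Bool,
        ((univ.filter fun x : X => A (fun i => (xs i, f (xs i))) x ≠ f x).card : ℝ) := by
  classical
  have hrw : ∀ f : X → Bool,
      ((univ.filter fun x : X => A (fun i => (xs i, f (xs i))) x ≠ f x).card : ℝ)
        = ∑ x : X, (if A (fun i => (xs i, f (xs i))) x ≠ f x then (1:ℝ) else 0) := by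
    intro f
    rw [Finset.card_filter]
    push_cast
    rfl
  simp only [hrw]
  rw [Finset.sum_comm]
  set G : Finset X := univ.filter fun x => ∀ i, xs i ≠ x with hG
  have hGub : (Fintype.card X : ℝ) - m ≤ (G.card : ℝ) := by
    have h1 : (univ.filter fun x : X => ¬ ∀ i, xs i ≠ x) ⊆ Finset.image xs univ := by
      intro x hx
      simp only [Finset.mem_filter, not_forall, not_not] at hx
      obtain ⟨-, i, hi⟩ := hx
      exact Finset.mem_image.mpr ⟨i, Finset.mem_univ i, hi⟩
    have h2 : (univ.filter fun x : X => ¬ ∀ i, xs i ≠ x).card ≤ m := by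
      calc (univ.filter fun x : X => ¬ ∀ i, xs i ≠ x).card
          ≤ (Finset.image xs univ).card := Finset.card_le_card h1
        _ ≤ (univ : Finset (Fin m)).card := Finset.card_image_le
        _ = m := by simp
    have h3 : G.card + (univ.filter fun x : X => ¬ ∀ i, xs i ≠ x).card = Fintype.card X := by
      rw [hG, Finset.card_filter_add_card_filter_not]
      rfl
    have := h2
    have h4 : (Fintype.card X : ℝ) = (G.card : ℝ) +
        ((univ.filter fun x : X => ¬ ∀ i, xs i ≠ x).card : ℝ) := by
      exact_mod_cast h3.symm
    have h5 : ((univ.filter fun x : X => ¬ ∀ i, xs i ≠ x).card : ℝ) ≤ m := by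
      exact_mod_cast h2
    linarith
  have hstep : ∑ x ∈ G, ∑ f : X → Bool,
      (if A (fun i => (xs i, f (xs i))) x ≠ f x then (1:ℝ) else 0)
      ≤ ∑ x : X, ∑ f : X → Bool,
      (if A (fun i => (xs i, f (xs i))) x ≠ f x then (1:ℝ) else 0) := by
    apply Finset.sum_le_sum_of_subset_of_nonneg (Finset.subset_univ G)
    intro x _ _
    apply Finset.sum_nonneg
    intro f _
    positivity
  have hGval : ∀ x ∈ G, ∑ f : X → Bool,
      (if A (fun i => (xs i, f (xs i))) x ≠ f x then (1:ℝ) else 0)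
        = (Fintype.card (X → Bool) : ℝ) / 2 := by
    intro x hx
    rw [hG, Finset.mem_filter] at hx
    have := flip_sum A xs x hx.2
    linarith
  have hGsum : ∑ x ∈ G, ∑ f : X → Bool,
      (if A (fun i => (xs i, f (xs i))) x ≠ f x then (1:ℝ) else 0)
        = (G.card : ℝ) * ((Fintype.card (X → Bool) : ℝ) / 2) := by
    rw [Finset.sum_congr rfl hGval, Finset.sum_const, nsmul_eq_mul]
  calc ((Fintype.card X : ℝ) - m) * (Fintype.card (X → Bool) : ℝ) / 2
      ≤ (G.card : ℝ) * ((Fintype.card (X → Bool) : ℝ) / 2) := by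
        have hc : (0:ℝ) ≤ (Fintype.card (X → Bool) : ℝ) / 2 := by positivity
        calc ((Fintype.card X : ℝ) - m) * (Fintype.card (X → Bool) : ℝ) / 2
            = ((Fintype.card X : ℝ) - m) * ((Fintype.card (X → Bool) : ℝ) / 2) := by ring
          _ ≤ (G.card : ℝ) * ((Fintype.card (X → Bool) : ℝ) / 2) :=
              mul_le_mul_of_nonneg_right hGub hc
    _ = ∑ x ∈ G, ∑ f : X → Bool,
        (if A (fun i => (xs i, f (xs i))) x ≠ f x then (1:ℝ) else 0) := hGsum.symm
    _ ≤ _ := hstep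

/-- No-free-lunch theorem: for every deterministic learning rule `A` mapping samples of
size `m` over a finite domain `X` with binary labels to predictors, there is a labeling
function `f` whose induced distribution (uniform `x`, label `f x`) has zero population
error for `f` itself, while the expected population 0-1 error of `A` is at least
`1/2 - m / (2 |X|)`. -/
theorem no_free_lunch
    (X : Type*) [Fintype X] [DecidableEq X] [Nonempty X] (m : ℕ)
    (A : (Fin m → X × Bool) → (X → Bool)) :
    ∃ f : X → Bool,
      ((Fintype.card X : ℝ))⁻¹ *
          ((univ.filter fun x : X => f x ≠ f x).card : ℝ) = 0 ∧
      ((Fintype.card X : ℝ) ^ m)⁻¹ *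
          ∑ xs : Fin m → X,
            ((Fintype.card X : ℝ))⁻¹ *
              ((univ.filter fun x : X =>
                  A (fun i => (xs i, f (xs i))) x ≠ f x).card : ℝ)
        ≥ 1 / 2 - (m : ℝ) / (2 * Fintype.card X) := by
  classical
  have hn0 : (0:ℝ) < (Fintype.card X : ℝ) := by
    exact_mod_cast Fintype.card_pos
  set V : (X → Bool) → ℝ := fun f =>
    ((Fintype.card X : ℝ) ^ m)⁻¹ *
      ∑ xs : Fin m → X,
        ((Fintype.card X : ℝ))⁻¹ *
          ((univ.filter fun x : X =>
              A (fun i => (xs i, f (xs i))) x ≠ f x).card : ℝ) with hV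
  suffices h : ∃ f : X → Bool, (1:ℝ)/2 - (m:ℝ)/(2 * Fintype.card X) ≤ V f by
    obtain ⟨f, hf⟩ := h
    refine ⟨f, by simp, hf⟩
  -- it suffices to bound the sum over all f
  have havg : ∑ f : X → Bool, ((1:ℝ)/2 - (m:ℝ)/(2 * Fintype.card X))
      ≤ ∑ f : X → Bool, V f := by
    have hswap : ∑ f : X → Bool, V f =
        ((Fintype.card X : ℝ) ^ m)⁻¹ * ((Fintype.card X : ℝ))⁻¹ *
          ∑ xs : Fin m → X, ∑ f : X → Bool,
            ((univ.filter fun x : X =>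
                A (fun i => (xs i, f (xs i))) x ≠ f x).card : ℝ) := by
      rw [hV]
      rw [← Finset.mul_sum]
      rw [Finset.sum_comm]
      simp only [← Finset.mul_sum]
      ring
    rw [hswap, Finset.sum_const, nsmul_eq_mul]
    have hbound : ∑ xs : Fin m → X, ((Fintype.card X : ℝ) - m) *
          (Fintype.card (X → Bool) : ℝ) / 2
        ≤ ∑ xs : Fin m → X, ∑ f : X → Bool,
            ((univ.filter fun x : X =>
                A (fun i => (xs i, f (xs i))) x ≠ f x).card : ℝ) :=
      Finset.sum_le_sum (fun xs _ => sample_bound A xs)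
    rw [Finset.sum_const, nsmul_eq_mul] at hbound
    have hcardfun : ((univ : Finset (Fin m → X)).card : ℝ) = (Fintype.card X : ℝ) ^ m := by
      rw [Finset.card_univ]
      rw [show Fintype.card (Fin m → X) = Fintype.card X ^ Fintype.card (Fin m) from
        Fintype.card_fun]
      push_cast [Fintype.card_fin]
      ring
    rw [hcardfun] at hbound
    have hpow : (0:ℝ) < (Fintype.card X : ℝ) ^ m := by positivity
    have hmul : ((Fintype.card X : ℝ) ^ m)⁻¹ * ((Fintype.card X : ℝ))⁻¹ *
          ((Fintype.card X : ℝ) ^ m * (((Fintype.card X : ℝ) - m) *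
            (Fintype.card (X → Bool) : ℝ) / 2))
        ≤ ((Fintype.card X : ℝ) ^ m)⁻¹ * ((Fintype.card X : ℝ))⁻¹ *
          ∑ xs : Fin m → X, ∑ f : X → Bool,
            ((univ.filter fun x : X =>
                A (fun i => (xs i, f (xs i))) x ≠ f x).card : ℝ) := by
      apply mul_le_mul_of_nonneg_left hbound
      positivity
    refine le_trans (le_of_eq ?_) hmul
    have hne : (Fintype.card X : ℝ) ≠ 0 := ne_of_gt hn0
    have hpne : ((Fintype.card X : ℝ) ^ m) ≠ 0 := ne_of_gt hpow
    rw [Finset.card_univ]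
    field_simp
  have hne : (univ : Finset (X → Bool)).Nonempty := Finset.univ_nonempty
  obtain ⟨f, -, hf⟩ := Finset.exists_le_of_sum_le hne havg
  exact ⟨f, hf⟩
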